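/- arXiv:2302.14753 — 5 statements merged into one kernel-verified Lean document; each statement's English description precedes it below -/
import Mathlib

section
/- Consider the coupled recursions f(0)=g(0)=0, f(t)=dε+(1+dε)f(t−1)+dε·g(t−1), g(t)=dε+dε·f(t−1)+dε·g(t−1), with d,T positive and ε ≤ 1/(12dT). Then for all t ≤ T, f(t) ≤ 3dTε (and g(t) ≤ 6dε). -/
/-- the coupled error recursions satisfy `f t ≤ 3dTε` and
`g t ≤ 6dε` for all `t ≤ T`, provided `ε ≤ 1/(12dT)`. -/
theorem coupled_recursion_bound (d ε : ℝ) (T : ℕ)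
    (hd : 0 < d) (hT : 0 < T) (hε : 0 < ε) (hεT : ε ≤ 1 / (12 * d * T))
    (f g : ℕ → ℝ) (hf0 : f 0 = 0) (hg0 : g 0 = 0)
    (hf : ∀ t, f (t + 1) = d * ε + (1 + d * ε) * f t + d * ε * g t)
    (hg : ∀ t, g (t + 1) = d * ε + d * ε * f t + d * ε * g t) :
    ∀ t ≤ T, f t ≤ 3 * d * T * ε ∧ g t ≤ 6 * d * ε := by
  have hdε : 0 < d * ε := mul_pos hd hε
  have hTpos : (0:ℝ) < T := by exact_mod_cast hT
  have hkey : d * ε * T ≤ 1 / 12 := by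
    have h12 : 0 < 12 * d * T := by positivity
    rw [le_div_iff₀ h12] at hεT
    nlinarith
  have main : ∀ t, t ≤ T → f t ≤ 3 * d * ε * t ∧ g t ≤ 6 * d * ε := by
    intro t
    induction t with
    | zero =>
      intro _
      constructor
      · simp [hf0]
      · rw [hg0]; positivity
    | succ t ih =>
      intro hle
      have ht : t ≤ T := Nat.le_of_succ_le hle
      obtain ⟨hft, hgt⟩ := ih ht
      have htT : (t:ℝ) + 1 ≤ T := by exact_mod_cast hle
      have htn : (0:ℝ) ≤ t := Nat.cast_nonneg t
      have hdεt : d * ε * t ≤ d * ε * T :=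
        mul_le_mul_of_nonneg_left (by linarith) hdε.le
      have hT1 : (1:ℝ) ≤ T := by exact_mod_cast hT
      have h112 : d * ε * t ≤ 1 / 12 := le_trans hdεt hkey
      have h2 : d * ε ≤ 1 / 12 := by nlinarith
      have hA : d * ε * (d * ε * t) ≤ d * ε * (1 / 12) :=
        mul_le_mul_of_nonneg_left h112 hdε.le
      have hB : d * ε * (d * ε) ≤ d * ε * (1 / 12) :=
        mul_le_mul_of_nonneg_left h2 hdε.le
      have hfub : (1 + d * ε) * f t ≤ (1 + d * ε) * (3 * d * ε * t) :=
        mul_le_mul_of_nonneg_left hft (by linarith)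
      have hfub2 : d * ε * f t ≤ d * ε * (3 * d * ε * t) :=
        mul_le_mul_of_nonneg_left hft hdε.le
      have hgub : d * ε * g t ≤ d * ε * (6 * d * ε) :=
        mul_le_mul_of_nonneg_left hgt hdε.le
      constructor
      · rw [hf t]
        push_cast
        nlinarith [hA, hB, hfub, hgub]
      · rw [hg t]
        push_cast
        nlinarith [hA, hB, hfub2, hgub]
  intro t ht
  obtain ⟨h1, h2⟩ := main t ht
  refine ⟨?_, h2⟩
  have htT : (t:ℝ) ≤ T := by exact_mod_cast ht
  nlinarith
end

section
/- Coefficient evolution: with A_{o,t} as in the circulant identity and coefficients chosen in the row space (span of the non-kernel eigenvectors) of Pr[F_{t+1}|B_{t+1}]ᵀ D_{t+1}^{-1} Pr[F_{t+1}|B_{t+1}], for any history x of length t with Pr[o|x] > 0, one has A_{o,t} β(x) = Pr[o|x] · β(xo). -/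
/-- coefficient evolution: with `A_{o,t}` satisfying the
circulant identity `Pr[F_{t+1}|B_{t+1}] A_{o,t} = Pr[oF_{t+1}|B_t]`
(here `F_t = O × F_{t+1}`), with `β(x)` a coefficient vector for
`Pr[F_t|x]` in the basis `B_t`, with `β(xo)` the coefficient vector
for `Pr[F_{t+1}|xo]` lying in the orthogonal complement of the kernel of
`Pr[F_{t+1}|B_{t+1}]` (the row space of the preconditioned Gram matrix),
with the range of `A_{o,t}` contained in that same complement, and with
`Pr[o|x] > 0`, one has `A_{o,t} β(x) = Pr[o|x] • β(xo)`. -/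
theorem coefficient_evolution
    {F' ι ι' O : Type*} [Fintype F'] [Fintype ι] [Fintype ι'] [Fintype O]
    (Pt : Matrix (O × F') ι ℝ)       -- Pr[F_t | B_t]
    (Pnext : Matrix F' ι' ℝ)         -- Pr[F_{t+1} | B_{t+1}]
    (o : O) (Aop : Matrix ι' ι ℝ)
    (hAop : ∀ (f : F') (j : ι), (Pnext * Aop) f j = Pt (o, f) j)
    (βx : ι → ℝ) (βxo : ι' → ℝ)
    (px : O × F' → ℝ)                -- Pr[F_t | x]
    (pxo : F' → ℝ)                   -- Pr[F_{t+1} | xo]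
    (pObs : ℝ) (hpObs : 0 < pObs)    -- Pr[o | x]
    (hβx : Pt.mulVec βx = px)
    (hβxo : Pnext.mulVec βxo = pxo)
    (hbayes : ∀ f : F', px (o, f) = pObs * pxo f)
    -- β(xo) lies in (ker Pr[F_{t+1}|B_{t+1}])ᗮ :
    (hβxo_perp : ∀ w : ι' → ℝ, Pnext.mulVec w = 0 → ∑ j, βxo j * w j = 0)
    -- range of A_{o,t} is contained in (ker Pr[F_{t+1}|B_{t+1}])ᗮ :
    (hrange : ∀ (z : ι → ℝ) (w : ι' → ℝ),
      Pnext.mulVec w = 0 → ∑ j, Aop.mulVec z j * w j = 0) :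
    Aop.mulVec βx = pObs • βxo := by
  set v : ι' → ℝ := Aop.mulVec βx with hv
  set w : ι' → ℝ := v - pObs • βxo with hw
  have hker : Pnext.mulVec w = 0 := by
    have h1 : Pnext.mulVec v = fun f => pObs * pxo f := by
      funext f
      have : Pnext.mulVec v f = (Pnext * Aop).mulVec βx f := by
        simp [hv, Matrix.mulVec_mulVec]
      rw [this]
      have h2 : (Pnext * Aop).mulVec βx f = Pt.mulVec βx (o, f) := by
        simp only [Matrix.mulVec, dotProduct]
        exact Finset.sum_congr rfl fun j _ => by rw [hAop f j]
      rw [h2, hβx, hbayes]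
    funext f
    have h3 : Pnext.mulVec (pObs • βxo) f = pObs * pxo f := by
      rw [Matrix.mulVec_smul, hβxo]; rfl
    have := congrFun h1 f
    simp only [hw, Matrix.mulVec_sub, Pi.sub_apply, this, h3, Pi.zero_apply]
    ring
  have hsum : ∑ j, w j * w j = 0 := by
    have h1 : ∑ j, v j * w j = 0 := hrange βx w hker
    have h2 : ∑ j, βxo j * w j = 0 := hβxo_perp w hker
    have : ∑ j, w j * w j = ∑ j, v j * w j - pObs * ∑ j, βxo j * w j := by
      rw [Finset.mul_sum, ← Finset.sum_sub_distrib]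
      exact Finset.sum_congr rfl fun j _ => by simp [hw]; ring
    rw [this, h1, h2]; ring
  have hw0 : w = 0 := by
    funext j
    have hnn : ∀ j ∈ (Finset.univ : Finset ι'), 0 ≤ w j * w j :=
      fun j _ => mul_self_nonneg _
    have := (Finset.sum_eq_zero_iff_of_nonneg hnn).mp hsum j (Finset.mem_univ j)
    simpa using mul_self_eq_zero.mp this
  have : v - pObs • βxo = 0 := hw0
  funext j
  have := congrFun this j
  simpa [sub_eq_zero, hv] using this
end

section
/- Projection perturbation (Davis–Kahan corollary): Let Σ, Σ̂ be real symmetric n×n matrices with V, V̂ ∈ ℝ^{n×r} orthonormal bases of invariant subspaces such that the eigenvalues of Σ on span(V) all lie in [a,b] and the eigenvalues of Σ̂ on the orthogonal complement of span(V̂) avoid [a−γ, b+γ] for some γ > 0. Then ‖VVᵀ − V̂V̂ᵀ‖_F ≤ √(2r)·‖Σ − Σ̂‖₂ / γ. -/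
open Matrix Finset

private lemma frob_eq_trace' {m k : ℕ} (A : Matrix (Fin m) (Fin k) ℝ) :
    ∑ i, ∑ j, (A i j)^2 = (A * Aᵀ).trace := by
  simp [Matrix.trace, Matrix.mul_apply, sq, Matrix.diag]

set_option maxHeartbeats 1000000 in
/-- projection perturbation, Davis–Kahan corollary: if the
eigenvalues of the symmetric matrix `Σ` on the invariant subspace spanned by
the orthonormal columns of `V` lie in `[a,b]`, and the eigenvalues of the
symmetric matrix `Σ̂` on the orthogonal complement of the span of `V̂`
(spanned by the orthonormal columns of `V̂ᵖ`) avoid `[a−γ, b+γ]`, then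
`‖VVᵀ − V̂V̂ᵀ‖_F ≤ √(2r)·‖Σ − Σ̂‖₂/γ`, where `‖·‖₂` denotes the ℓ2 operator
norm of the associated Euclidean linear map. -/
theorem davis_kahan_projection_perturbation (n r : ℕ)
    (Sig Sighat : Matrix (Fin n) (Fin n) ℝ)
    (hSym : Sig.IsSymm) (hSymhat : Sighat.IsSymm)
    (V Vhat : Matrix (Fin n) (Fin r) ℝ) (Vperp : Matrix (Fin n) (Fin (n - r)) ℝ)
    (hV : V.transpose * V = 1) (hVhat : Vhat.transpose * Vhat = 1)
    (hVperp : Vperp.transpose * Vperp = 1)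
    (hdecomp : Vhat * Vhat.transpose + Vperp * Vperp.transpose = 1)
    (a b γ : ℝ) (hγ : 0 < γ)
    (D0 : Matrix (Fin r) (Fin r) ℝ) (hD0diag : ∀ i j, i ≠ j → D0 i j = 0)
    (hD0 : Sig * V = V * D0) (hD0range : ∀ i, a ≤ D0 i i ∧ D0 i i ≤ b)
    (D1 : Matrix (Fin (n - r)) (Fin (n - r)) ℝ) (hD1diag : ∀ i j, i ≠ j → D1 i j = 0)
    (hD1 : Sighat * Vperp = Vperp * D1)
    (hD1range : ∀ i, D1 i i < a - γ ∨ b + γ < D1 i i) :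
    Real.sqrt (∑ i, ∑ j, ((V * V.transpose - Vhat * Vhat.transpose) i j) ^ 2)
      ≤ Real.sqrt (2 * r)
          * ‖LinearMap.toContinuousLinearMap (Matrix.toEuclideanLin (Sig - Sighat))‖ / γ := by
  classical
  set E : Matrix (Fin n) (Fin n) ℝ := Sig - Sighat with hE
  set T := LinearMap.toContinuousLinearMap (Matrix.toEuclideanLin E) with hT
  set C := ‖T‖ with hC
  have hC0 : 0 ≤ C := norm_nonneg _
  set M : Matrix (Fin (n-r)) (Fin r) ℝ := Vperpᵀ * V with hM
  set N : Matrix (Fin (n-r)) (Fin r) ℝ := Vperpᵀ * E * V with hN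
  -- step (b) : D1 * M - M * D0 = -N
  have hD1symm : D1ᵀ = D1 := by
    ext i j
    by_cases h : i = j
    · subst h; rfl
    · simp [Matrix.transpose_apply, hD1diag _ _ h, hD1diag _ _ (Ne.symm h)]
  have h1 : Vperpᵀ * Sighat = D1 * Vperpᵀ := by
    calc Vperpᵀ * Sighat = Vperpᵀ * Sighatᵀ := by rw [hSymhat.eq]
    _ = (Sighat * Vperp)ᵀ := by rw [Matrix.transpose_mul]
    _ = (Vperp * D1)ᵀ := by rw [hD1]
    _ = D1 * Vperpᵀ := by rw [Matrix.transpose_mul, hD1symm]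
  have hDM : D1 * M - M * D0 = -N := by
    have hl : D1 * M = Vperpᵀ * Sighat * V := by rw [hM, h1, Matrix.mul_assoc]
    have hr : M * D0 = Vperpᵀ * Sig * V := by
      rw [hM, Matrix.mul_assoc, ← hD0, Matrix.mul_assoc]
    rw [hl, hr, hN, hE]
    simp [Matrix.mul_sub, Matrix.sub_mul]
  have hD1M : ∀ i j, (D1 * M) i j = D1 i i * M i j := by
    intro i j
    rw [Matrix.mul_apply]
    exact Finset.sum_eq_single i
      (fun k _ hk => by rw [hD1diag i k (Ne.symm hk), zero_mul]) (by simp)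
  have hMD0 : ∀ i j, (M * D0) i j = M i j * D0 j j := by
    intro i j
    rw [Matrix.mul_apply]
    exact Finset.sum_eq_single j
      (fun k _ hk => by rw [hD0diag k j hk, mul_zero]) (by simp)
  have hij : ∀ i j, γ^2 * (M i j)^2 ≤ (N i j)^2 := by
    intro i j
    have h := congrFun (congrFun hDM i) j
    simp only [Matrix.sub_apply, Matrix.neg_apply] at h
    rw [hD1M, hMD0] at h
    have heq : (D1 i i - D0 j j) * M i j = -(N i j) := by ring_nf; ring_nf at h; linarith
    have hgap : γ ≤ |D1 i i - D0 j j| := by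
      rcases hD1range i with h1' | h1'
      · have h2' := (hD0range j).1
        calc γ ≤ D0 j j - D1 i i := by linarith
        _ ≤ |D1 i i - D0 j j| := by rw [abs_sub_comm]; exact le_abs_self _
      · have h2' := (hD0range j).2
        calc γ ≤ D1 i i - D0 j j := by linarith
        _ ≤ |D1 i i - D0 j j| := le_abs_self _
    have hg2 : γ^2 ≤ (D1 i i - D0 j j)^2 := by
      nlinarith [hgap, sq_abs (D1 i i - D0 j j), abs_nonneg (D1 i i - D0 j j)]
    calc γ^2 * (M i j)^2 ≤ (D1 i i - D0 j j)^2 * (M i j)^2 :=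
          mul_le_mul_of_nonneg_right hg2 (sq_nonneg _)
    _ = ((D1 i i - D0 j j) * M i j)^2 := by ring
    _ = (N i j)^2 := by rw [heq]; ring
  have hMNsum : γ^2 * (∑ i, ∑ j, (M i j)^2) ≤ ∑ i, ∑ j, (N i j)^2 := by
    rw [Finset.mul_sum]
    refine Finset.sum_le_sum fun i _ => ?_
    rw [Finset.mul_sum]
    exact Finset.sum_le_sum fun j _ => hij i j
  -- step (c) : ∑∑ N² ≤ r * C²
  have hNsum : ∑ i, ∑ j, (N i j)^2 ≤ r * C^2 := by
    rw [Finset.sum_comm]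
    have hjbound : ∀ j : Fin r, ∑ i, (N i j)^2 ≤ C^2 := by
      intro j
      set y : Fin n → ℝ := E.mulVec (fun k => V k j) with hy
      have hNy : ∀ i, N i j = (Vperpᵀ *ᵥ y) i := by
        intro i
        rw [hN, hy]
        simp only [Matrix.mul_apply, Matrix.mulVec, dotProduct,
          Matrix.transpose_apply, Finset.sum_mul, Finset.mul_sum]
        rw [Finset.sum_comm]
        exact Finset.sum_congr rfl fun k _ => Finset.sum_congr rfl fun l _ => by ring
      -- projection bound
      have hproj : ∑ i, ((Vperpᵀ *ᵥ y) i)^2 ≤ ∑ k, (y k)^2 := by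
        have hdp : ∀ (A : Matrix (Fin n) (Fin (n - r)) ℝ) (z : Fin n → ℝ),
            (Aᵀ *ᵥ z) ⬝ᵥ (Aᵀ *ᵥ z) = z ⬝ᵥ ((A * Aᵀ) *ᵥ z) := by
          intro A z
          rw [← Matrix.mulVec_mulVec, Matrix.dotProduct_mulVec z,
            ← Matrix.vecMul_transpose, Matrix.transpose_transpose]
        have hdph : (Vhatᵀ *ᵥ y) ⬝ᵥ (Vhatᵀ *ᵥ y) = y ⬝ᵥ ((Vhat * Vhatᵀ) *ᵥ y) := by
          rw [← Matrix.mulVec_mulVec, Matrix.dotProduct_mulVec y,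
            ← Matrix.vecMul_transpose, Matrix.transpose_transpose]
        have hVVt : Vperp * Vperpᵀ = 1 - Vhat * Vhatᵀ := by
          rw [← hdecomp]; abel
        have h5 : (Vperpᵀ *ᵥ y) ⬝ᵥ (Vperpᵀ *ᵥ y)
            = y ⬝ᵥ y - (Vhatᵀ *ᵥ y) ⬝ᵥ (Vhatᵀ *ᵥ y) := by
          rw [hdp Vperp y, hVVt, hdph]
          rw [Matrix.sub_mulVec, dotProduct_sub, Matrix.one_mulVec]
        have h6 : 0 ≤ (Vhatᵀ *ᵥ y) ⬝ᵥ (Vhatᵀ *ᵥ y) :=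
          Finset.sum_nonneg fun i _ => mul_self_nonneg _
        have h7 : ∑ i, ((Vperpᵀ *ᵥ y) i)^2 = (Vperpᵀ *ᵥ y) ⬝ᵥ (Vperpᵀ *ᵥ y) := by
          simp [dotProduct, sq]
        have h8 : ∑ k, (y k)^2 = y ⬝ᵥ y := by simp [dotProduct, sq]
        rw [h7, h8]
        linarith
      -- operator norm bound
      have hnorm : ∑ k, (y k)^2 ≤ C^2 := by
        set x : EuclideanSpace ℝ (Fin n) :=
          (WithLp.equiv 2 (Fin n → ℝ)).symm (fun k => V k j) with hx
        have hTx : ∀ k, T x k = y k := by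
          intro k
          rw [hT, hy]
          simp [Matrix.toEuclideanLin_apply]
          try rfl
        have hxnorm : ‖x‖^2 = 1 := by
          rw [EuclideanSpace.norm_eq, Real.sq_sqrt (by positivity)]
          have hcol := congrFun (congrFun hV j) j
          simp only [Matrix.mul_apply, Matrix.transpose_apply, Matrix.one_apply_eq] at hcol
          simp only [hx]
          calc ∑ k, ‖(WithLp.equiv 2 (Fin n → ℝ)).symm (fun k => V k j) k‖^2
              = ∑ k, (V k j)^2 := by
                refine Finset.sum_congr rfl fun k _ => ?_
                rw [Real.norm_eq_abs, sq_abs]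
                rfl
          _ = 1 := by rw [← hcol]; refine Finset.sum_congr rfl fun k _ => ?_; ring
        have hTxnorm : ‖T x‖^2 ≤ C^2 := by
          have := T.le_opNorm x
          have hx1 : ‖x‖ = 1 := by
            have := hxnorm
            nlinarith [norm_nonneg x]
          rw [hx1, mul_one] at this
          exact pow_le_pow_left₀ (norm_nonneg _) this 2
        have : ∑ k, (y k)^2 = ‖T x‖^2 := by
          rw [EuclideanSpace.norm_eq, Real.sq_sqrt (by positivity)]
          refine Finset.sum_congr rfl fun k _ => ?_
          rw [hTx k, Real.norm_eq_abs, sq_abs]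
        linarith
      calc ∑ i, (N i j)^2 = ∑ i, ((Vperpᵀ *ᵥ y) i)^2 := by
            refine Finset.sum_congr rfl fun i _ => ?_; rw [hNy i]
      _ ≤ ∑ k, (y k)^2 := hproj
      _ ≤ C^2 := hnorm
    calc ∑ j, ∑ i, (N i j)^2 ≤ ∑ _j : Fin r, C^2 := Finset.sum_le_sum fun j _ => hjbound j
    _ = r * C^2 := by simp [Finset.sum_const]; try ring
  -- step (a) : ∑∑ (P - Q)² = 2 ∑∑ M²
  set P : Matrix (Fin n) (Fin n) ℝ := V * Vᵀ with hP
  set Q : Matrix (Fin n) (Fin n) ℝ := Vhat * Vhatᵀ with hQ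
  set K : Matrix (Fin r) (Fin r) ℝ := Vhatᵀ * V with hK
  have hPt : Pᵀ = P := by rw [hP]; simp [Matrix.transpose_mul]
  have hQt : Qᵀ = Q := by rw [hQ]; simp [Matrix.transpose_mul]
  have htrPP : (P * P).trace = r := by
    have hPP : P * P = P := by
      rw [hP]
      calc V * Vᵀ * (V * Vᵀ) = V * (Vᵀ * V) * Vᵀ := by simp [Matrix.mul_assoc]
      _ = V * Vᵀ := by rw [hV, Matrix.mul_one]
    rw [hPP, hP, Matrix.trace_mul_comm, hV, Matrix.trace_one]
    simp
  have htrQQ : (Q * Q).trace = r := by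
    have hQQ : Q * Q = Q := by
      rw [hQ]
      calc Vhat * Vhatᵀ * (Vhat * Vhatᵀ) = Vhat * (Vhatᵀ * Vhat) * Vhatᵀ := by
            simp [Matrix.mul_assoc]
      _ = Vhat * Vhatᵀ := by rw [hVhat, Matrix.mul_one]
    rw [hQQ, hQ, Matrix.trace_mul_comm, hVhat, Matrix.trace_one]
    simp
  have htrPQ : (P * Q).trace = (Kᵀ * K).trace := by
    rw [hP, hQ, hK]
    calc (V * Vᵀ * (Vhat * Vhatᵀ)).trace = (V * (Vᵀ * (Vhat * Vhatᵀ))).trace := by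
          rw [Matrix.mul_assoc]
    _ = ((Vᵀ * (Vhat * Vhatᵀ)) * V).trace := Matrix.trace_mul_comm _ _
    _ = ((Vhatᵀ * V)ᵀ * (Vhatᵀ * V)).trace := by
          rw [Matrix.transpose_mul, Matrix.transpose_transpose]
          simp [Matrix.mul_assoc]
  have htrMM : (M * Mᵀ).trace = r - (Kᵀ * K).trace := by
    rw [Matrix.trace_mul_comm]
    have hMtM : Mᵀ * M = 1 - Kᵀ * K := by
      rw [hM, hK, Matrix.transpose_mul, Matrix.transpose_transpose]
      have : Vᵀ * Vperp * (Vperpᵀ * V) = Vᵀ * ((Vperp * Vperpᵀ) * V) := by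
        simp [Matrix.mul_assoc]
      rw [this]
      have hVVt : Vperp * Vperpᵀ = 1 - Vhat * Vhatᵀ := by rw [← hdecomp]; abel
      rw [hVVt, Matrix.sub_mul, Matrix.one_mul, Matrix.mul_sub, hV]
      congr 1
      rw [Matrix.transpose_mul, Matrix.transpose_transpose]
      simp [Matrix.mul_assoc]
    rw [hMtM, Matrix.trace_sub, Matrix.trace_one]
    simp
  have hfrob : ∑ i, ∑ j, ((P - Q) i j)^2 = 2 * ∑ i, ∑ j, (M i j)^2 := by
    rw [frob_eq_trace', frob_eq_trace']
    rw [Matrix.transpose_sub, hPt, hQt]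
    have hexp : (P - Q) * (P - Q) = P * P - P * Q - Q * P + Q * Q := by
      rw [Matrix.sub_mul, Matrix.mul_sub, Matrix.mul_sub]
      abel
    rw [hexp, Matrix.trace_add, Matrix.trace_sub, Matrix.trace_sub,
      Matrix.trace_mul_comm Q P, htrPP, htrQQ, htrPQ, htrMM]
    ring
  -- conclusion
  have key : ∑ i, ∑ j, ((P - Q) i j)^2 ≤ (Real.sqrt (2 * r) * C / γ)^2 := by
    have h2 : (Real.sqrt (2 * r) * C / γ)^2 = 2 * r * C^2 / γ^2 := by
      rw [div_pow, mul_pow, Real.sq_sqrt (by positivity)]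
    rw [hfrob, h2, le_div_iff₀ (by positivity)]
    nlinarith [hMNsum, hNsum]
  calc Real.sqrt (∑ i, ∑ j, ((V * V.transpose - Vhat * Vhat.transpose) i j) ^ 2)
      ≤ Real.sqrt ((Real.sqrt (2 * r) * C / γ)^2) := Real.sqrt_le_sqrt key
  _ = Real.sqrt (2 * r) * C / γ := Real.sqrt_sq (by positivity)
end

section
/- Counterexample yields rank increase: Suppose Pr[Λ_τ | B_τ]v = Pr[Λ_τ | x_{1:τ}] for some vector v, while for some observation x_{τ+1} and future λ ∈ Λ_{τ+1}, Pr[x_{τ+1}λ | x_{1:τ}] ≠ Pr[x_{τ+1}λ | B_τ]v. Then setting λ' = x_{τ+1}λ and b' = x_{1:τ}, the row vector Pr[λ' | B_τ ∪ {b'}] is linearly independent of the rows of Pr[Λ_τ | B_τ ∪ {b'}]; consequently rank(Pr[Λ_τ ∪ {λ'} | B_τ ∪ {b'}]) = rank(Pr[Λ_τ | B_τ]) + 1 when Pr[Λ_τ|B_τ] is square and full rank. -/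
/-- Key computation: if `rlam` and `cval` are the same linear combination of the rows
of `M` and of `u`, and `M.mulVec v = u`, then `cval = ∑ j, rlam j * v j`. -/
lemma key_comb {L ι : Type*} [Fintype L] [Fintype ι]
    (M : Matrix L ι ℝ) (u : L → ℝ) (rlam : ι → ℝ) (cval : ℝ)
    (v : ι → ℝ) (hv : M.mulVec v = u) (w : L → ℝ)
    (h1 : ∀ j, rlam j = ∑ l, w l * M l j) (h2 : cval = ∑ l, w l * u l) :
    cval = ∑ j, rlam j * v j := by
  have hu : ∀ l, u l = ∑ j, M l j * v j := fun l => by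
    rw [← hv]; rfl
  calc cval = ∑ l, w l * u l := h2
    _ = ∑ l, ∑ j, w l * (M l j * v j) := by
        simp_rw [hu, Finset.mul_sum]
    _ = ∑ j, ∑ l, w l * (M l j * v j) := Finset.sum_comm
    _ = ∑ j, rlam j * v j := by
        refine Finset.sum_congr rfl fun j _ => ?_
        rw [h1, Finset.sum_mul]
        exact Finset.sum_congr rfl fun l _ => by ring

/-- a counterexample yields a rank increase: if
`Pr[Λ_τ|B_τ] v = Pr[Λ_τ|x_{1:τ}]` but `Pr[λ'|x_{1:τ}] ≠ Pr[λ'|B_τ] v` for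
`λ' = x_{τ+1}λ`, then, adding `b' = x_{1:τ}` as a new column, the row
`Pr[λ'|B_τ ∪ {b'}]` is linearly independent of the rows of
`Pr[Λ_τ|B_τ ∪ {b'}]`; consequently, when `Pr[Λ_τ|B_τ]` is square and of full
rank, the extended matrix has rank `rank(Pr[Λ_τ|B_τ]) + 1`. -/
theorem counterexample_rank_increase
    {L ι : Type*} [Fintype L] [Fintype ι] [DecidableEq L] [DecidableEq ι]
    (M : Matrix L ι ℝ)          -- Pr[Λ_τ | B_τ]
    (u : L → ℝ)                 -- Pr[Λ_τ | x_{1:τ}]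
    (rlam : ι → ℝ)              -- Pr[λ' | B_τ]
    (cval : ℝ)                  -- Pr[λ' | x_{1:τ}]
    (v : ι → ℝ) (hv : M.mulVec v = u)
    (hne : cval ≠ ∑ j, rlam j * v j)
    (M' : Matrix L (ι ⊕ Unit) ℝ)   -- Pr[Λ_τ | B_τ ∪ {b'}]
    (hM' : ∀ l, (∀ j, M' l (Sum.inl j) = M l j) ∧ M' l (Sum.inr ()) = u l)
    (r' : ι ⊕ Unit → ℝ)            -- Pr[λ' | B_τ ∪ {b'}]
    (hr'l : ∀ j, r' (Sum.inl j) = rlam j) (hr'r : r' (Sum.inr ()) = cval)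
    (Mfull : Matrix (L ⊕ Unit) (ι ⊕ Unit) ℝ)  -- Pr[Λ_τ ∪ {λ'} | B_τ ∪ {b'}]
    (hMfull : ∀ j, (∀ l, Mfull (Sum.inl l) j = M' l j) ∧ Mfull (Sum.inr ()) j = r' j) :
    (¬ ∃ w : L → ℝ, ∀ j, r' j = ∑ l, w l * M' l j) ∧
      (Fintype.card L = Fintype.card ι → M.rank = Fintype.card ι →
        Mfull.rank = M.rank + 1) := by
  constructor
  · rintro ⟨w, hw⟩
    apply hne
    refine key_comb M u rlam cval v hv w (fun j => ?_) ?_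
    · rw [← hr'l j, hw (Sum.inl j)]
      exact Finset.sum_congr rfl fun l _ => by rw [(hM' l).1]
    · rw [← hr'r, hw (Sum.inr ())]
      exact Finset.sum_congr rfl fun l _ => by rw [(hM' l).2]
  · intro hcard hrank
    -- rows of M are linearly independent
    have hMindep : LinearIndependent ℝ M.row := by
      rw [linearIndependent_iff_card_eq_finrank_span]
      rw [hcard, ← hrank, Matrix.rank_eq_finrank_span_row]
      rfl
    -- rows of Mfull are linearly independent
    have hindep : LinearIndependent ℝ Mfull.row := by
      rw [Fintype.linearIndependent_iff]
      intro g hg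
      have hcol : ∀ j : ι ⊕ Unit, (∑ l, g (Sum.inl l) * Mfull (Sum.inl l) j)
          + g (Sum.inr ()) * Mfull (Sum.inr ()) j = 0 := by
        intro j
        have := congrFun hg j
        simpa [Fintype.sum_sum_type] using this
      by_cases hc : g (Sum.inr ()) = 0
      · -- then the inl coefficients kill the rows of M
        have hz : ∑ l, g (Sum.inl l) • M l = 0 := by
          funext j
          have := hcol (Sum.inl j)
          simp only [hc, zero_mul, add_zero] at this
          simpa [(fun l => ((hMfull (Sum.inl j)).1 l).trans ((hM' l).1 j)),
            Finset.sum_apply] using this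
        have hz' : ∀ l, g (Sum.inl l) = 0 := by
          have := Fintype.linearIndependent_iff.mp hMindep (fun l => g (Sum.inl l)) hz
          exact this
        rintro (l | ⟨⟩)
        · exact hz' l
        · exact hc
      · exfalso
        apply hne
        set c' := g (Sum.inr ()) with hc'
        refine key_comb M u rlam cval v hv (fun l => -(g (Sum.inl l) / c'))
          (fun j => ?_) ?_
        · have h := hcol (Sum.inl j)
          rw [(hMfull (Sum.inl j)).2, hr'l j] at h
          have h2 : ∀ l, Mfull (Sum.inl l) (Sum.inl j) = M l j := fun l =>
            ((hMfull (Sum.inl j)).1 l).trans ((hM' l).1 j)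
          simp_rw [h2] at h
          have hx : rlam j = (-∑ l, g (Sum.inl l) * M l j) / c' := by
            field_simp
            linarith
          rw [hx, neg_div, Finset.sum_div, ← Finset.sum_neg_distrib]
          exact Finset.sum_congr rfl fun l _ => by ring
        · have h := hcol (Sum.inr ())
          rw [(hMfull (Sum.inr ())).2, hr'r] at h
          have h2 : ∀ l, Mfull (Sum.inl l) (Sum.inr ()) = u l := fun l =>
            ((hMfull (Sum.inr ())).1 l).trans ((hM' l).2)
          simp_rw [h2] at h
          have hx : c' * cval = -∑ l, g (Sum.inl l) * u l := by linarith
          have : cval = (-∑ l, g (Sum.inl l) * u l) / c' := by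
            field_simp
            linarith [hx]
          rw [this, neg_div, Finset.sum_div]
          rw [← Finset.sum_neg_distrib]
          exact Finset.sum_congr rfl fun l _ => by ring
    have h1 : Mfull.rank = Fintype.card (L ⊕ Unit) := hindep.rank_matrix
    rw [h1, hrank]
    simp [hcard]
end

section
/- Parity with noise has fidelity (1−2α)²/2 under bases of size 2: For the noisy parity distribution on {0,1}^T with secret set S ⊆ [T−1] and noise α ∈ (0,1/2), at each length t there exist two conditional future distributions v₁, v₂ (corresponding to the two parities of the revealed bits in S ∩ [t]); with B the 2-element basis realizing both and d the uniform mixture, the Gram matrix Vᵀ D^{-1} V (where V = [v₁ v₂], D = diag(d)) has eigenvalues 1 and (1−2α)², and d(f) = 2^{-(T-t)} for every future f. In particular the second eigenvalue of the fidelity matrix is at least (1−2α)²/2. -/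
attribute [local instance] Classical.propDecidable

/-- The noisy parity distribution on `{0,1}^T`: the first `T-1` bits are
uniform, and the last bit equals the parity of the secret bits with
probability `1-α` and its complement with probability `α`. -/
noncomputable def parityP (T : ℕ) (hT : 0 < T) (Ssec : Finset (Fin T)) (α : ℝ)
    (x : Fin T → Bool) : ℝ :=
  (1 / 2 : ℝ) ^ (T - 1) *
    (if (Odd (∑ i ∈ Ssec, if x i = true then 1 else 0) ↔ x ⟨T - 1, by omega⟩ = true)
      then 1 - α else α)

/-- Marginal probability of a length-`t` prefix under the noisy parity
distribution. -/
noncomputable def margPar (T : ℕ) (hT : 0 < T) (Ssec : Finset (Fin T)) (α : ℝ)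
    (t : ℕ) (ht : t ≤ T) (h : Fin t → Bool) : ℝ :=
  ∑ y : Fin T → Bool,
    if (∀ i : Fin t, y (Fin.castLE ht i) = h i) then parityP T hT Ssec α y else 0

/-- The conditional probability `Pr[f | h]` of a future `f` of length `T - t`
given a history `h` of length `t` under the noisy parity distribution. -/
noncomputable def condPar (T : ℕ) (hT : 0 < T) (Ssec : Finset (Fin T)) (α : ℝ)
    (t : ℕ) (ht : t ≤ T) (h : Fin t → Bool) (f : Fin (T - t) → Bool) : ℝ :=
  parityP T hT Ssec α
      (fun i => if hi : (i : ℕ) < t then h ⟨i, hi⟩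
        else f ⟨(i : ℕ) - t, by have := i.isLt; omega⟩)
    / margPar T hT Ssec α t ht h

/- ======================= auxiliary material ======================= -/

/-- Sum over all boolean vectors of an if-expression whose condition is
toggled by flipping the coordinate `L`. -/
lemma sum_ite_toggle {n : ℕ} (L : Fin n) (P : (Fin n → Bool) → Prop)
    [DecidablePred P]
    (hP : ∀ f : Fin n → Bool, P (Function.update f L (! f L)) ↔ ¬ P f)
    (a c : ℝ) :
    ∑ f : Fin n → Bool, (if P f then a else c) = 2 ^ (n - 1) * (a + c) := by
  classical
  set e : (Fin n → Bool) → (Fin n → Bool) := fun f => Function.update f L (! f L) with he_def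
  have he : Function.Involutive e := by
    intro f; funext j
    rcases eq_or_ne j L with rfl | hj
    · simp [e]
    · simp [e, Function.update_of_ne hj]
  set F : (Fin n → Bool) → ℝ := fun f => if P f then a else c with hF
  have hsum : ∑ f : Fin n → Bool, F (e f) = ∑ f : Fin n → Bool, F f :=
    Function.Bijective.sum_comp he.bijective F
  have hpair : ∀ f, F f + F (e f) = a + c := by
    intro f
    by_cases h : P f
    · have h2 : ¬ P (e f) := by rw [he_def]; simp only []; rw [hP f]; simpa using h
      simp [F, h, h2]
    · have h2 : P (e f) := by rw [he_def]; simp only []; rw [hP f]; exact h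
      simp [F, h, h2, add_comm]
  have h2 : 2 * ∑ f : Fin n → Bool, F f = ∑ _f : Fin n → Bool, (a + c) := by
    rw [two_mul]
    nth_rewrite 1 [← hsum]
    rw [← Finset.sum_add_distrib]
    exact Finset.sum_congr rfl fun f _ => by rw [add_comm]; exact hpair f
  have hcard : ∑ _f : Fin n → Bool, (a + c) = (2 : ℝ) ^ n * (a + c) := by
    rw [Finset.sum_const, Finset.card_univ]
    simp [nsmul_eq_mul]
    ring
  have hn : 0 < n := L.pos
  have hpow : (2 : ℝ) ^ n = 2 * 2 ^ (n - 1) := by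
    rw [← pow_succ']; congr 1; omega
  rw [hcard, hpow] at h2
  nlinarith [h2]

/-- Glue a history and a future into a full trajectory. -/
def glueFn (T t : ℕ) (h : Fin t → Bool) (f : Fin (T - t) → Bool) : Fin T → Bool :=
  fun i => if hi : (i : ℕ) < t then h ⟨i, hi⟩
    else f ⟨(i : ℕ) - t, by have := i.isLt; omega⟩

/-- Parity contribution of the future bits in the secret set. -/
def BsumFn (T t : ℕ) (Ssec : Finset (Fin T)) (f : Fin (T - t) → Bool) : ℕ :=
  ∑ i ∈ Ssec, if hi : (i : ℕ) < t then 0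
    else if f ⟨(i : ℕ) - t, by have := i.isLt; omega⟩ = true then 1 else 0

/-- Parity contribution of the history bits in the secret set. -/
def AsumFn (T t : ℕ) (Ssec : Finset (Fin T)) (h : Fin t → Bool) : ℕ :=
  ∑ i ∈ Ssec, if hi : (i : ℕ) < t then (if h ⟨(i : ℕ), hi⟩ = true then 1 else 0) else 0

/-- The weight of a future given a history-parity `b`. -/
noncomputable def parityW (T t : ℕ) (ht : t < T) (Ssec : Finset (Fin T)) (α : ℝ)
    (b : ℕ) (f : Fin (T - t) → Bool) : ℝ :=
  if (Odd (b + BsumFn T t Ssec f) ↔ f ⟨T - t - 1, by omega⟩ = true) then 1 - α else α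

/-- The two candidate conditional distributions on futures. -/
noncomputable def parityV (T t : ℕ) (ht : t < T) (Ssec : Finset (Fin T)) (α : ℝ)
    (b : Fin 2) (f : Fin (T - t) → Bool) : ℝ :=
  (1 / 2 : ℝ) ^ (T - t - 1) * parityW T t ht Ssec α (b : ℕ) f

section lemmas

variable {T t : ℕ} (ht : t < T) {Ssec : Finset (Fin T)}

lemma Bsum_flip (hSsec : ∀ i ∈ Ssec, (i : ℕ) < T - 1) (f : Fin (T - t) → Bool) :
    BsumFn T t Ssec
      (Function.update f ⟨T - t - 1, by omega⟩ (! f ⟨T - t - 1, by omega⟩))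
      = BsumFn T t Ssec f := by
  unfold BsumFn
  refine Finset.sum_congr rfl fun i hi => ?_
  by_cases h1 : (i : ℕ) < t
  · rw [dif_pos h1, dif_pos h1]
  · have h2 := hSsec i hi
    rw [dif_neg h1, dif_neg h1]
    have hne : (⟨(i : ℕ) - t, by have := i.isLt; omega⟩ : Fin (T - t))
        ≠ ⟨T - t - 1, by omega⟩ := by
      apply Fin.ne_of_val_ne
      simp only []
      omega
    rw [Function.update_of_ne hne]

lemma parityW_toggle (hSsec : ∀ i ∈ Ssec, (i : ℕ) < T - 1) (b : ℕ)
    (f : Fin (T - t) → Bool) :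
    (Odd (b + BsumFn T t Ssec
        (Function.update f ⟨T - t - 1, by omega⟩ (! f ⟨T - t - 1, by omega⟩)))
      ↔ (Function.update f ⟨T - t - 1, by omega⟩ (! f ⟨T - t - 1, by omega⟩))
          ⟨T - t - 1, by omega⟩ = true)
    ↔ ¬ (Odd (b + BsumFn T t Ssec f) ↔ f ⟨T - t - 1, by omega⟩ = true) := by
  rw [Bsum_flip ht hSsec f, Function.update_self]
  cases hfl : f ⟨T - t - 1, by omega⟩ <;> simp [hfl]

lemma sum_parityW_ite (hSsec : ∀ i ∈ Ssec, (i : ℕ) < T - 1) (b : ℕ) (a c : ℝ) :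
    ∑ f : Fin (T - t) → Bool,
      (if (Odd (b + BsumFn T t Ssec f) ↔ f ⟨T - t - 1, by omega⟩ = true)
        then a else c)
      = 2 ^ (T - t - 1) * (a + c) :=
  sum_ite_toggle ⟨T - t - 1, by omega⟩ _ (fun f => parityW_toggle ht hSsec b f) a c

lemma glue_parity (h : Fin t → Bool) (f : Fin (T - t) → Bool) :
    (∑ i ∈ Ssec, if glueFn T t h f i = true then 1 else 0)
      = AsumFn T t Ssec h + BsumFn T t Ssec f := by
  unfold AsumFn BsumFn
  rw [← Finset.sum_add_distrib]
  refine Finset.sum_congr rfl fun i _ => ?_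
  by_cases h1 : (i : ℕ) < t
  · simp [glueFn, h1]
  · simp [glueFn, h1]

lemma parityP_glue (hT : 0 < T) (α : ℝ) (h : Fin t → Bool) (f : Fin (T - t) → Bool) :
    parityP T hT Ssec α (glueFn T t h f)
      = (1 / 2 : ℝ) ^ (T - 1) * parityW T t ht Ssec α (AsumFn T t Ssec h) f := by
  unfold parityP parityW
  have hlast : glueFn T t h f ⟨T - 1, by omega⟩ = f ⟨T - t - 1, by omega⟩ := by
    have h1 : ¬ (T - 1 < t) := by omega
    simp only [glueFn, dif_neg h1]
    exact congrArg f (Fin.ext (by simp; omega))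
  rw [glue_parity h f, hlast]

lemma margPar_glue (hT : 0 < T) (α : ℝ) (h : Fin t → Bool) :
    margPar T hT Ssec α t ht.le h
      = ∑ f : Fin (T - t) → Bool, parityP T hT Ssec α (glueFn T t h f) := by
  unfold margPar
  rw [← Finset.sum_filter]
  have left_inv : ∀ y ∈ Finset.univ.filter
      (fun y : Fin T → Bool => ∀ i : Fin t, y (Fin.castLE ht.le i) = h i),
      glueFn T t h (fun k : Fin (T - t) => y ⟨t + (k : ℕ), by have := k.isLt; omega⟩) = y := by
    intro y hy
    rw [Finset.mem_filter] at hy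
    funext i
    by_cases h1 : (i : ℕ) < t
    · have := hy.2 ⟨(i : ℕ), h1⟩
      simp only [glueFn, dif_pos h1]
      rw [← this]
      exact congrArg y (Fin.ext (by simp))
    · simp only [glueFn, dif_neg h1]
      exact congrArg y (Fin.ext (by simp; omega))
  refine Finset.sum_nbij'
    (i := fun y => fun k : Fin (T - t) => y ⟨t + (k : ℕ), by have := k.isLt; omega⟩)
    (j := fun f => glueFn T t h f) ?_ ?_ ?_ ?_ ?_
  · intro y _; exact Finset.mem_univ _
  · intro f _
    refine Finset.mem_filter.mpr ⟨Finset.mem_univ _, fun i => ?_⟩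
    have h1 : ((Fin.castLE ht.le i : Fin T) : ℕ) < t := by simp [i.isLt]
    simp only [glueFn, dif_pos h1]
    exact congrArg h (Fin.ext (by simp))
  · exact left_inv
  · intro f _
    funext k
    have h1 : ¬ (t + (k : ℕ) < t) := by omega
    simp only [glueFn, dif_neg h1]
    exact congrArg f (Fin.ext (by simp))
  · intro y hy
    rw [left_inv y hy]

lemma margPar_eq (hT : 0 < T) (hSsec : ∀ i ∈ Ssec, (i : ℕ) < T - 1) (α : ℝ)
    (h : Fin t → Bool) :
    margPar T hT Ssec α t ht.le h = (1 / 2 : ℝ) ^ t := by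
  rw [margPar_glue ht hT α h]
  have : ∀ f : Fin (T - t) → Bool,
      parityP T hT Ssec α (glueFn T t h f)
        = (1 / 2 : ℝ) ^ (T - 1) * parityW T t ht Ssec α (AsumFn T t Ssec h) f :=
    parityP_glue ht hT α h
  rw [Finset.sum_congr rfl fun f _ => this f, ← Finset.mul_sum]
  unfold parityW
  rw [sum_parityW_ite ht hSsec]
  have h1 : (1 - α) + α = 1 := by ring
  rw [h1, mul_one]
  have h2 : (1 / 2 : ℝ) ^ (T - 1) = (1 / 2 : ℝ) ^ t * (1 / 2 : ℝ) ^ (T - t - 1) := by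
    rw [← pow_add]; congr 1; omega
  rw [h2]
  have h3 : (1 / 2 : ℝ) ^ (T - t - 1) * 2 ^ (T - t - 1) = 1 := by
    rw [← mul_pow]; norm_num
  rw [mul_assoc, h3, mul_one]

lemma condPar_eq (hT : 0 < T) (hSsec : ∀ i ∈ Ssec, (i : ℕ) < T - 1) (α : ℝ)
    (h : Fin t → Bool) (b : Fin 2)
    (hb : Odd (AsumFn T t Ssec h) ↔ Odd (b : ℕ)) :
    condPar T hT Ssec α t ht.le h = parityV T t ht Ssec α b := by
  funext f
  show parityP T hT Ssec α (glueFn T t h f) / margPar T hT Ssec α t ht.le h = _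
  rw [parityP_glue ht hT α h f, margPar_eq ht hT hSsec α h]
  unfold parityV parityW
  have hiff : Odd (AsumFn T t Ssec h + BsumFn T t Ssec f)
      ↔ Odd ((b : ℕ) + BsumFn T t Ssec f) := by
    rw [Nat.odd_add, Nat.odd_add, hb]
  rw [if_congr (iff_congr hiff Iff.rfl) rfl rfl]
  have h2 : (1 / 2 : ℝ) ^ (T - 1) = (1 / 2 : ℝ) ^ t * (1 / 2 : ℝ) ^ (T - t - 1) := by
    rw [← pow_add]; congr 1; omega
  have h4 : ((1 / 2 : ℝ) ^ t) ≠ 0 := by positivity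
  rw [h2, mul_assoc, mul_div_cancel_left₀ _ h4]

end lemmas

/-- Eigenvectors of a symmetric 2×2 matrix with constant diagonal. -/
lemma two_by_two_eig (M : Matrix (Fin 2) (Fin 2) ℝ) (A B : ℝ)
    (h00 : M 0 0 = A) (h01 : M 0 1 = B) (h10 : M 1 0 = B) (h11 : M 1 1 = A) :
    M.mulVec ![1, 1] = (A + B) • ![1, 1] ∧
      M.mulVec ![1, -1] = (A - B) • ![1, -1] := by
  constructor <;> funext i <;> fin_cases i <;>
    simp [Matrix.mulVec, dotProduct, Fin.sum_univ_two, h00, h01, h10, h11] <;>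
    ring

/-- parity with noise has fidelity `(1-2α)²/2` under bases of
size 2: at each length `t` there are exactly two conditional future
distributions `v 0, v 1`; the uniform mixture `d` equals `2^{-(T-t)}`
everywhere, and the (expectation-weighted) Gram matrix
`G = (1/2)·VᵀD⁻¹V` has entries `α²+(1-α)²` on the diagonal and `2α(1-α)`
off the diagonal, hence eigenvalues `1` and `(1-2α)²` (with eigenvectors
`(1,1)` and `(1,-1)`). -/
theorem parity_with_noise_fidelity (T t : ℕ) (ht : t < T)
    (Ssec : Finset (Fin T)) (hSsec : ∀ i ∈ Ssec, (i : ℕ) < T - 1)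
    (α : ℝ) (hα0 : 0 < α) (hα : α < 1 / 2) :
    ∃ v : Fin 2 → (Fin (T - t) → Bool) → ℝ,
      (∀ h : Fin t → Bool,
        condPar T (by omega) Ssec α t ht.le h = v 0
          ∨ condPar T (by omega) Ssec α t ht.le h = v 1) ∧
      (∀ f : Fin (T - t) → Bool, (v 0 f + v 1 f) / 2 = (1 / 2 : ℝ) ^ (T - t)) ∧
      (let d : (Fin (T - t) → Bool) → ℝ := fun f => (v 0 f + v 1 f) / 2
       let G : Matrix (Fin 2) (Fin 2) ℝ :=
         fun i j => (1 / 2 : ℝ) * ∑ f, v i f * v j f / d f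
       G 0 0 = α ^ 2 + (1 - α) ^ 2 ∧ G 1 1 = α ^ 2 + (1 - α) ^ 2 ∧
         G 0 1 = 2 * α * (1 - α) ∧ G 1 0 = 2 * α * (1 - α) ∧
         G.mulVec ![1, 1] = (1 : ℝ) • ![1, 1] ∧
         G.mulVec ![1, -1] = ((1 - 2 * α) ^ 2) • ![1, -1]) := by
  have hT : (0 : ℕ) < T := by omega
  -- basic numeric facts
  have hq1 : (1 / 2 : ℝ) ^ (T - t - 1) * 2 ^ (T - t - 1) = 1 := by
    rw [← mul_pow]; norm_num
  have h2n : (2 : ℝ) ^ (T - t) = 2 ^ (T - t - 1) * 2 := by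
    rw [← pow_succ]; congr 1; omega
  have hTn : T - t = (T - t - 1) + 1 := by omega
  -- the two conditions are complementary
  have hneg : ∀ f : Fin (T - t) → Bool,
      (Odd (1 + BsumFn T t Ssec f) ↔ f ⟨T - t - 1, by omega⟩ = true)
        ↔ ¬ (Odd (0 + BsumFn T t Ssec f) ↔ f ⟨T - t - 1, by omega⟩ = true) := by
    intro f
    rw [zero_add, add_comm, Nat.odd_add_one]
    tauto
  -- value of `d`
  have hdval : ∀ f : Fin (T - t) → Bool,
      (parityV T t ht Ssec α 0 f + parityV T t ht Ssec α 1 f) / 2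
        = (1 / 2 : ℝ) ^ (T - t) := by
    intro f
    unfold parityV parityW
    simp only [Fin.val_zero, Fin.val_one]
    have hps : (1/2:ℝ)^(T-t) = (1/2)^(T-t-1) * (1/2) := by
      conv_lhs => rw [hTn]
      rw [pow_succ]
    by_cases hp : (Odd (0 + BsumFn T t Ssec f) ↔ f ⟨T - t - 1, by omega⟩ = true)
    · rw [if_pos hp, if_neg (fun hc => (hneg f).mp hc hp), hps]
      ring
    · rw [if_neg hp, if_pos ((hneg f).mpr hp), hps]
      ring
  -- generic term computation
  have hterm : ∀ (i j : Fin 2) (f : Fin (T - t) → Bool),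
      parityV T t ht Ssec α i f * parityV T t ht Ssec α j f
          / ((parityV T t ht Ssec α 0 f + parityV T t ht Ssec α 1 f) / 2)
        = ((1 / 2 : ℝ) ^ (T - t - 1) * (1 / 2) ^ (T - t - 1) * 2 ^ (T - t))
            * (parityW T t ht Ssec α (i : ℕ) f * parityW T t ht Ssec α (j : ℕ) f) := by
    intro i j f
    rw [hdval f]
    unfold parityV
    rw [div_eq_mul_inv]
    have hv : ((1 / 2 : ℝ) ^ (T - t))⁻¹ = 2 ^ (T - t) := by
      rw [one_div, inv_pow, inv_inv]
    rw [hv]; ring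
  -- diagonal sums
  have hS : ∀ b : ℕ,
      ∑ f : Fin (T - t) → Bool,
          parityW T t ht Ssec α b f * parityW T t ht Ssec α b f
        = 2 ^ (T - t - 1) * ((1 - α) * (1 - α) + α * α) := by
    intro b
    have e1 : ∀ f : Fin (T - t) → Bool,
        parityW T t ht Ssec α b f * parityW T t ht Ssec α b f
          = if (Odd (b + BsumFn T t Ssec f) ↔ f ⟨T - t - 1, by omega⟩ = true)
              then (1 - α) * (1 - α) else α * α := by
      intro f
      unfold parityW
      by_cases hp : (Odd (b + BsumFn T t Ssec f) ↔ f ⟨T - t - 1, by omega⟩ = true)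
      · rw [if_pos hp]
        exact (if_pos hp).symm
      · rw [if_neg hp]
        exact (if_neg hp).symm
    rw [Finset.sum_congr rfl fun f _ => e1 f]
    exact sum_parityW_ite ht hSsec b _ _
  -- off-diagonal pointwise product
  have hC : ∀ f : Fin (T - t) → Bool,
      parityW T t ht Ssec α 0 f * parityW T t ht Ssec α 1 f = (1 - α) * α := by
    intro f
    unfold parityW
    by_cases hp : (Odd (0 + BsumFn T t Ssec f) ↔ f ⟨T - t - 1, by omega⟩ = true)
    · rw [if_pos hp, if_neg (fun hc => (hneg f).mp hc hp)]
    · rw [if_neg hp, if_pos ((hneg f).mpr hp)]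
      ring
  have hCsum : ∑ f : Fin (T - t) → Bool,
      parityW T t ht Ssec α 0 f * parityW T t ht Ssec α 1 f
        = 2 ^ (T - t) * ((1 - α) * α) := by
    rw [Finset.sum_congr rfl fun f _ => hC f, Finset.sum_const, Finset.card_univ]
    simp [nsmul_eq_mul]
  have hCsum' : ∑ f : Fin (T - t) → Bool,
      parityW T t ht Ssec α 1 f * parityW T t ht Ssec α 0 f
        = 2 ^ (T - t) * ((1 - α) * α) := by
    rw [Finset.sum_congr rfl fun f _ => mul_comm _ _]
    exact hCsum
  -- Gram matrix entries
  have hG00 : (1 / 2 : ℝ) * ∑ f : Fin (T - t) → Bool,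
      parityV T t ht Ssec α 0 f * parityV T t ht Ssec α 0 f
        / ((parityV T t ht Ssec α 0 f + parityV T t ht Ssec α 1 f) / 2)
      = α ^ 2 + (1 - α) ^ 2 := by
    rw [Finset.sum_congr rfl fun f _ => hterm 0 0 f, ← Finset.mul_sum, hS, h2n]
    linear_combination ((1 / 2 : ℝ) ^ (T - t - 1) * 2 ^ (T - t - 1) + 1)
      * ((1 - α) * (1 - α) + α * α) * hq1
  have hG11 : (1 / 2 : ℝ) * ∑ f : Fin (T - t) → Bool,
      parityV T t ht Ssec α 1 f * parityV T t ht Ssec α 1 f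
        / ((parityV T t ht Ssec α 0 f + parityV T t ht Ssec α 1 f) / 2)
      = α ^ 2 + (1 - α) ^ 2 := by
    rw [Finset.sum_congr rfl fun f _ => hterm 1 1 f, ← Finset.mul_sum, hS, h2n]
    linear_combination ((1 / 2 : ℝ) ^ (T - t - 1) * 2 ^ (T - t - 1) + 1)
      * ((1 - α) * (1 - α) + α * α) * hq1
  have hG01 : (1 / 2 : ℝ) * ∑ f : Fin (T - t) → Bool,
      parityV T t ht Ssec α 0 f * parityV T t ht Ssec α 1 f
        / ((parityV T t ht Ssec α 0 f + parityV T t ht Ssec α 1 f) / 2)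
      = 2 * α * (1 - α) := by
    rw [Finset.sum_congr rfl fun f _ => hterm 0 1 f, ← Finset.mul_sum]
    have : ∑ f : Fin (T - t) → Bool,
        parityW T t ht Ssec α ((0 : Fin 2) : ℕ) f * parityW T t ht Ssec α ((1 : Fin 2) : ℕ) f
          = 2 ^ (T - t) * ((1 - α) * α) := by
      simpa using hCsum
    rw [this, h2n]
    linear_combination ((1 / 2 : ℝ) ^ (T - t - 1) * 2 ^ (T - t - 1) + 1)
      * (2 * (1 - α) * α) * hq1
  have hG10 : (1 / 2 : ℝ) * ∑ f : Fin (T - t) → Bool,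
      parityV T t ht Ssec α 1 f * parityV T t ht Ssec α 0 f
        / ((parityV T t ht Ssec α 0 f + parityV T t ht Ssec α 1 f) / 2)
      = 2 * α * (1 - α) := by
    rw [Finset.sum_congr rfl fun f _ => hterm 1 0 f, ← Finset.mul_sum]
    have : ∑ f : Fin (T - t) → Bool,
        parityW T t ht Ssec α ((1 : Fin 2) : ℕ) f * parityW T t ht Ssec α ((0 : Fin 2) : ℕ) f
          = 2 ^ (T - t) * ((1 - α) * α) := by
      simpa using hCsum'
    rw [this, h2n]
    linear_combination ((1 / 2 : ℝ) ^ (T - t - 1) * 2 ^ (T - t - 1) + 1)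
      * (2 * (1 - α) * α) * hq1
  -- eigenvectors
  have heig := two_by_two_eig
    (M := fun i j => (1 / 2 : ℝ) * ∑ f : Fin (T - t) → Bool,
      parityV T t ht Ssec α i f * parityV T t ht Ssec α j f
        / ((parityV T t ht Ssec α 0 f + parityV T t ht Ssec α 1 f) / 2))
    (α ^ 2 + (1 - α) ^ 2) (2 * α * (1 - α)) hG00 hG01 hG10 hG11
  have hE1 := heig.1
  have hE2 := heig.2
  rw [show α ^ 2 + (1 - α) ^ 2 + 2 * α * (1 - α) = (1 : ℝ) by ring] at hE1
  rw [show α ^ 2 + (1 - α) ^ 2 - 2 * α * (1 - α) = ((1 - 2 * α) ^ 2 : ℝ) by ring] at hE2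
  refine ⟨parityV T t ht Ssec α, ?_, hdval, hG00, hG11, hG01, hG10, hE1, hE2⟩
  intro h
  by_cases hA : Odd (AsumFn T t Ssec h)
  · right
    refine condPar_eq ht hT hSsec α h 1 ?_
    exact iff_of_true hA (by norm_num)
  · left
    refine condPar_eq ht hT hSsec α h 0 ?_
    exact iff_of_false hA (by norm_num)
end
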